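/- Let q be a nonnegative integer and r a real with 0 ≤ r < 1. The function g(P) = ((q + 1 − P + r) + √((q + 1 − P + r)² + 4P))/2 − r is monotone non-increasing in P on the real interval [q + 2, ∞). -/
import Mathlib


/-- The pre-floor count of wasted retries is non-increasing on [q+2, ∞). -/
theorem wasted_retries_antitone_high
    (q : ℕ) (r : ℝ) (hr0 : 0 ≤ r) (hr1 : r < 1) :
    AntitoneOn
      (fun P : ℝ =>
        (((q : ℝ) + 1 - P + r) +
          Real.sqrt (((q : ℝ) + 1 - P + r) ^ 2 + 4 * P)) / 2 - r)
      (Set.Ici ((q : ℝ) + 2)) := by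
  intro P1 h1 P2 h2 h12
  simp only [Set.mem_Ici] at h1 h2
  have hq : (0:ℝ) ≤ q := Nat.cast_nonneg q
  set a1 : ℝ := (q:ℝ) + 1 - P1 + r with ha1
  set a2 : ℝ := (q:ℝ) + 1 - P2 + r with ha2
  have hE1 : (0:ℝ) ≤ a1 ^ 2 + 4 * P1 := by nlinarith
  have hE2 : (0:ℝ) ≤ a2 ^ 2 + 4 * P2 := by nlinarith
  set s1 : ℝ := Real.sqrt (a1 ^ 2 + 4 * P1) with hs1
  set s2 : ℝ := Real.sqrt (a2 ^ 2 + 4 * P2) with hs2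
  have hsq1 : s1 ^ 2 = a1 ^ 2 + 4 * P1 := Real.sq_sqrt hE1
  have hsq2 : s2 ^ 2 = a2 ^ 2 + 4 * P2 := Real.sq_sqrt hE2
  have hlb1 : 2 - a1 ≤ s1 := by
    rw [hs1]
    rw [show a1 ^ 2 + 4 * P1 = (2 - a1) ^ 2 + 4 * ((q:ℝ) + r) by rw [ha1]; ring]
    nlinarith [Real.sqrt_le_sqrt (show (2 - a1) ^ 2 ≤ (2 - a1) ^ 2 + 4 * ((q:ℝ) + r) by nlinarith),
      Real.sqrt_sq (show (0:ℝ) ≤ 2 - a1 by rw [ha1]; linarith)]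
  have hlb2 : 2 - a2 ≤ s2 := by
    rw [hs2]
    rw [show a2 ^ 2 + 4 * P2 = (2 - a2) ^ 2 + 4 * ((q:ℝ) + r) by rw [ha2]; ring]
    nlinarith [Real.sqrt_le_sqrt (show (2 - a2) ^ 2 ≤ (2 - a2) ^ 2 + 4 * ((q:ℝ) + r) by nlinarith),
      Real.sqrt_sq (show (0:ℝ) ≤ 2 - a2 by rw [ha2]; linarith)]
  have hpos1 : (0:ℝ) < 2 - a1 := by rw [ha1]; linarith
  have hpos2 : (0:ℝ) < 2 - a2 := by rw [ha2]; linarith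
  -- goal: (a2 + s2)/2 - r ≤ (a1 + s1)/2 - r
  have key : s2 - s1 ≤ P2 - P1 := by
    nlinarith [mul_nonneg (sub_nonneg.2 h12) (show (0:ℝ) ≤ s1 + s2 - (4 - a1 - a2) by linarith)]
  simp only
  linarith [key, show a2 = a1 - (P2 - P1) by rw [ha1, ha2]; ring]
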